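/- arXiv:0904.1984 — 3 statements merged into one kernel-verified Lean document; each statement's English description precedes it below -/
import Mathlib

section
/- Let $n\ge 2$ and $1\le k\le n$ be integers, $h\in\mathbb{R}$, $c<0$, and let $g:(a_1,a_2)\to\mathbb{R}$ be positive, differentiable with $g'(t)\ne 0$ and $(g'(t))^2 = c + g(t)^2\,(h+g(t)^{-n})^2$ for all $t$. Set $\lambda = h+g^{-n}$, $r = g/\sqrt{-c}$, fix $t_0\in(a_1,a_2)$ and let $R(t)=\int_{t_0}^t r(\tau)\lambda(\tau)\,d\tau$. Let $e_{n+1}=(0,\dots,0,1)\in\mathbb{R}^{n+1}$. Then $(r')^2 - r^2\lambda^2 = -1$ on $(a_1,a_2)$, and for every $y\in\mathbb{R}^{n+1}$ with $y_{n+1}=0$ and $\langle y,y\rangle = -1$, the curves $\phi(u) = r(u)\,y + R(u)\,e_{n+1}$ and $\nu(u) = -r(u)\lambda(u)\,y - r'(u)\,e_{n+1}$ satisfy: $\langle\phi',\phi'\rangle\equiv 1$, $\langle\nu,\nu\rangle\equiv -1$, $\langle\nu,\phi'\rangle\equiv 0$, $\langle\nu(u),v\rangle = 0$ for every $v\in\mathbb{R}^{n+1}$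 with $v_{n+1}=0$ and $\langle v,y\rangle = 0$, and $\nu'(u) = -(nh-(n-1)\lambda(u))\,\phi'(u)$ for all $u$. -/
/-- The semi-riemannian bilinear form of index `k` on `ℝ^m`:
`⟨v,w⟩ = -v₁w₁ - ⋯ - v_k w_k + v_{k+1} w_{k+1} + ⋯ + v_m w_m`
(coordinates are 0-indexed in Lean, so the first `k` indices carry sign `-1`). -/
noncomputable def semiForm (k : ℕ) {m : ℕ} (v w : Fin m → ℝ) : ℝ :=
  ∑ i : Fin m, (if (i : ℕ) < k then (-1 : ℝ) else 1) * v i * w i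

lemma semiForm_comb {k m : ℕ} (a b a' b' : ℝ) (v w : Fin m → ℝ) :
    semiForm k (a • v + b • w) (a' • v + b' • w) =
      a * a' * semiForm k v v + (a * b' + b * a') * semiForm k v w
        + b * b' * semiForm k w w := by
  simp only [semiForm, Pi.add_apply, Pi.smul_apply, smul_eq_mul, Finset.mul_sum,
    ← Finset.sum_add_distrib]
  exact Finset.sum_congr rfl fun i _ => by ring

lemma semiForm_comb_left {k m : ℕ} (a b : ℝ) (v w x : Fin m → ℝ) :
    semiForm k (a • v + b • w) x = a * semiForm k v x + b * semiForm k w x := by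
  simp only [semiForm, Pi.add_apply, Pi.smul_apply, smul_eq_mul, Finset.mul_sum,
    ← Finset.sum_add_distrib]
  exact Finset.sum_congr rfl fun i _ => by ring

lemma semiForm_e {k n : ℕ} (hkn : k ≤ n) (e x : Fin (n + 1) → ℝ)
    (he : ∀ i, e i = if (i : ℕ) = n then 1 else 0) :
    semiForm k e x = x ⟨n, n.lt_succ_self⟩ := by
  rw [semiForm, Finset.sum_eq_single (⟨n, n.lt_succ_self⟩ : Fin (n + 1))]
  · simp [he, Nat.not_lt.mpr hkn]
  · intro i _ hi
    have : (i : ℕ) ≠ n := fun hh => hi (Fin.ext hh)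
    simp [he, this]
  · simp

lemma semiForm_comm {k m : ℕ} (v w : Fin m → ℝ) : semiForm k v w = semiForm k w v :=
  Finset.sum_congr rfl fun i _ => by ring

/-- Theorem 2.24 of the paper (a family of cmc hypersurfaces of `ℝ_k^{n+1}`;
space-like cmc hypersurfaces of the Minkowski space when `k = 1`).
Coordinate `n+1` of the paper (1-indexed) is index `n` here. -/
theorem stmt_10 (n k : ℕ) (hn : 2 ≤ n) (hk1 : 1 ≤ k) (hkn : k ≤ n)
    (h c a₁ a₂ t₀ : ℝ) (hc : c < 0) (ht₀ : t₀ ∈ Set.Ioo a₁ a₂)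
    (g lam r R : ℝ → ℝ)
    (hgdiff : ∀ t ∈ Set.Ioo a₁ a₂, DifferentiableAt ℝ g t)
    (hgpos : ∀ t ∈ Set.Ioo a₁ a₂, 0 < g t)
    (hg' : ∀ t ∈ Set.Ioo a₁ a₂, deriv g t ≠ 0)
    (hode : ∀ t ∈ Set.Ioo a₁ a₂,
      deriv g t ^ 2 = c + g t ^ 2 * (h + g t ^ (-(n : ℤ))) ^ 2)
    (hlam : ∀ t, lam t = h + g t ^ (-(n : ℤ)))
    (hr : ∀ t, r t = g t / Real.sqrt (-c))
    (hR : ∀ t, R t = ∫ τ in t₀..t, r τ * lam τ)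
    (e : Fin (n + 1) → ℝ)
    (he : ∀ i, e i = if (i : ℕ) = n then 1 else 0) :
    (∀ t ∈ Set.Ioo a₁ a₂, deriv r t ^ 2 - r t ^ 2 * lam t ^ 2 = -1) ∧
    ∀ y : Fin (n + 1) → ℝ,
      (∀ i : Fin (n + 1), (i : ℕ) = n → y i = 0) →
      semiForm k y y = -1 →
      ∀ φ ν : ℝ → Fin (n + 1) → ℝ,
        (∀ u, φ u = r u • y + R u • e) →
        (∀ u, ν u = (-(r u * lam u)) • y - deriv r u • e) →
        ∀ u ∈ Set.Ioo a₁ a₂,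
          semiForm k (deriv φ u) (deriv φ u) = 1 ∧
          semiForm k (ν u) (ν u) = -1 ∧
          semiForm k (ν u) (deriv φ u) = 0 ∧
          (∀ v : Fin (n + 1) → ℝ,
            (∀ i : Fin (n + 1), (i : ℕ) = n → v i = 0) →
            semiForm k v y = 0 → semiForm k (ν u) v = 0) ∧
          deriv ν u = (-((n : ℝ) * h - ((n : ℝ) - 1) * lam u)) • deriv φ u := by
  set s : Set ℝ := Set.Ioo a₁ a₂ with hsdef
  have hsopen : IsOpen s := isOpen_Ioo
  have hsconv : Convex ℝ s := convex_Ioo a₁ a₂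
  have hcpos : (0:ℝ) < -c := by linarith
  have hsq : Real.sqrt (-c) ^ 2 = -c := Real.sq_sqrt hcpos.le
  have hsqpos : 0 < Real.sqrt (-c) := Real.sqrt_pos.mpr hcpos
  -- derivative of lam
  have hlamd : ∀ t ∈ s, HasDerivAt lam ((-(n:ℝ)) * g t ^ (-(n:ℤ) - 1) * deriv g t) t := by
    intro t ht
    have hz := ((hasDerivAt_zpow (-(n:ℤ)) (g t) (Or.inl (hgpos t ht).ne')).comp t
      (hgdiff t ht).hasDerivAt)
    have hz2 : HasDerivAt (fun x => h + g x ^ (-(n:ℤ)))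
        ((-(n:ℝ)) * g t ^ (-(n:ℤ) - 1) * deriv g t) t := by
      have h3 := (hasDerivAt_const t h).add hz
      refine h3.congr_deriv ?_
      push_cast
      ring
    exact hz2.congr_of_eventuallyEq (by filter_upwards with x using hlam x)
  have hlamc : ∀ t ∈ s, ContinuousAt lam t := fun t ht => (hlamd t ht).continuousAt
  have hrc : ∀ t ∈ s, ContinuousAt r t := by
    intro t ht
    have : ContinuousAt (fun x => g x / Real.sqrt (-c)) t :=
      ((hgdiff t ht).continuousAt).div_const _
    exact this.congr (by filter_upwards with x using (hr x).symm)
  -- derivative of r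
  have hrd : ∀ t ∈ s, HasDerivAt r (deriv g t / Real.sqrt (-c)) t := by
    intro t ht
    have : HasDerivAt (fun x => g x / Real.sqrt (-c)) (deriv g t / Real.sqrt (-c)) t :=
      ((hgdiff t ht).hasDerivAt).div_const _
    exact this.congr_of_eventuallyEq (by filter_upwards with x using hr x)
  have hrderiv : ∀ t ∈ s, deriv r t = deriv g t / Real.sqrt (-c) := fun t ht => (hrd t ht).deriv
  -- first conclusion
  have key1 : ∀ t ∈ s, deriv r t ^ 2 - r t ^ 2 * lam t ^ 2 = -1 := by
    intro t ht
    have h1 := hode t ht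
    rw [hrderiv t ht, hr t, hlam t, div_pow, div_pow, hsq, div_mul_eq_mul_div,
      div_sub_div_same]
    have h2 : deriv g t ^ 2 - g t ^ 2 * (h + g t ^ (-(n:ℤ))) ^ 2 = c := by linarith
    rw [h2, div_neg, div_self hc.ne]
  -- derivative of R
  have hconts : ∀ x ∈ s, ContinuousAt (fun τ => r τ * lam τ) x := fun x hx =>
    (hrc x hx).mul (hlamc x hx)
  have hRd : ∀ u ∈ s, HasDerivAt R (r u * lam u) u := by
    intro u hu
    have hsub : Set.uIcc t₀ u ⊆ s := by
      rw [hsdef]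
      exact (Set.ordConnected_Ioo).uIcc_subset ht₀ hu
    have hint : IntervalIntegrable (fun τ => r τ * lam τ) MeasureTheory.volume t₀ u :=
      ContinuousOn.intervalIntegrable (fun x hx => ((hconts x (hsub hx)).continuousWithinAt))
    have hmeas := ContinuousAt.stronglyMeasurableAtFilter (μ := MeasureTheory.volume) hsopen hconts u hu
    have h4 := intervalIntegral.integral_hasDerivAt_right hint hmeas (hconts u hu)
    exact h4.congr_of_eventuallyEq (by filter_upwards with x using hR x)
  -- Darboux: constant sign of g'
  obtain ⟨ε, hε2, hsign⟩ : ∃ ε : ℝ, ε ^ 2 = 1 ∧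
      ∀ t ∈ s, deriv g t = ε * Real.sqrt (deriv g t ^ 2) := by
    rcases hasDerivWithinAt_forall_lt_or_forall_gt_of_forall_ne hsconv
      (fun x hx => ((hgdiff x hx).hasDerivAt).hasDerivWithinAt) (m := 0) hg' with hneg | hpos
    · refine ⟨-1, by norm_num, fun t ht => ?_⟩
      rw [Real.sqrt_sq_eq_abs, abs_of_neg (hneg t ht)]; ring
    · refine ⟨1, by norm_num, fun t ht => ?_⟩
      rw [Real.sqrt_sq_eq_abs, abs_of_pos (hpos t ht)]; ring
  have hεne : ε ≠ 0 := by
    intro hh; rw [hh] at hε2; norm_num at hε2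
  -- the function F and its derivative
  set F : ℝ → ℝ := fun t => c + g t ^ 2 * lam t ^ 2 with hFdef
  have hFt : ∀ t ∈ s, F t = deriv g t ^ 2 := by
    intro t ht
    rw [hFdef]; simp only [hlam t]
    exact (hode t ht).symm
  have hFpos : ∀ t ∈ s, 0 < F t := by
    intro t ht
    rw [hFt t ht]
    exact pow_two_pos_of_ne_zero (hg' t ht)
  set F' : ℝ → ℝ := fun t =>
    2 * g t * deriv g t * lam t ^ 2
      + g t ^ 2 * (2 * lam t * ((-(n:ℝ)) * g t ^ (-(n:ℤ) - 1) * deriv g t)) with hF'def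
  have hFd : ∀ t ∈ s, HasDerivAt F (F' t) t := by
    intro t ht
    have h1 : HasDerivAt (fun x => g x ^ 2) (2 * g t ^ 1 * deriv g t) t :=
      (hgdiff t ht).hasDerivAt.pow 2
    have h2 : HasDerivAt (fun x => lam x ^ 2)
        (2 * lam t ^ 1 * ((-(n:ℝ)) * g t ^ (-(n:ℤ) - 1) * deriv g t)) t :=
      (hlamd t ht).pow 2
    have h3 := (hasDerivAt_const t c).add (h1.mul h2)
    refine h3.congr_deriv ?_
    rw [hF'def]; ring
  -- second derivative of g
  have hg2 : ∀ u ∈ s, HasDerivAt (deriv g) (F' u / (2 * deriv g u)) u := by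
    intro u hu
    have hq : HasDerivAt (fun x => ε * Real.sqrt (F x))
        (ε * (F' u / (2 * Real.sqrt (F u)))) u :=
      ((hFd u hu).sqrt (hFpos u hu).ne').const_mul ε
    have heq : deriv g =ᶠ[nhds u] fun x => ε * Real.sqrt (F x) := by
      filter_upwards [hsopen.mem_nhds hu] with x hx
      rw [hsign x hx, hFt x hx]
    have h5 := hq.congr_of_eventuallyEq heq
    have hval : ε * (F' u / (2 * Real.sqrt (F u))) = F' u / (2 * deriv g u) := by
      have hg'eq : deriv g u = ε * Real.sqrt (F u) := by
        rw [hsign u hu, hFt u hu]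
      have hsqF : Real.sqrt (F u) ≠ 0 := (Real.sqrt_pos.mpr (hFpos u hu)).ne'
      rw [hg'eq]
      field_simp
      linear_combination (F' u) * hε2
    rwa [hval] at h5
  have hdr2 : ∀ u ∈ s, HasDerivAt (deriv r) (F' u / (2 * deriv g u) / Real.sqrt (-c)) u := by
    intro u hu
    have h6 := (hg2 u hu).div_const (Real.sqrt (-c))
    refine h6.congr_of_eventuallyEq ?_
    filter_upwards [hsopen.mem_nhds hu] with x hx
    exact hrderiv x hx
  refine ⟨key1, ?_⟩
  intro y hy hyy φ ν hφ hν u hu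
  have hyE : semiForm k y e = 0 := by
    rw [semiForm_comm, semiForm_e hkn e y he]
    exact hy _ rfl
  have heE : semiForm k e e = 1 := by
    rw [semiForm_e hkn e e he]
    simp [he]
  -- derivative of φ
  have hφd : HasDerivAt φ (deriv r u • y + (r u * lam u) • e) u := by
    have h1 := ((hrd u hu).smul_const y).add ((hRd u hu).smul_const e)
    have h2 := h1.congr_of_eventuallyEq (by filter_upwards with x using hφ x)
    rwa [hrderiv u hu]
  have hφderiv : deriv φ u = deriv r u • y + (r u * lam u) • e := hφd.deriv
  have hνu : ν u = (-(r u * lam u)) • y + (-(deriv r u)) • e := by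
    rw [hν u, sub_eq_add_neg, ← neg_smul]
  have hode' := key1 u hu
  refine ⟨?_, ?_, ?_, ?_, ?_⟩
  · rw [hφderiv, semiForm_comb, hyy, hyE, heE]
    nlinarith [hode']
  · rw [hνu, semiForm_comb, hyy, hyE, heE]
    nlinarith [hode']
  · rw [hνu, hφderiv, semiForm_comb, hyy, hyE, heE]
    ring
  · intro v hv hvy
    rw [hνu, semiForm_comb_left]
    have h1 : semiForm k y v = 0 := by rw [semiForm_comm]; exact hvy
    have h2 : semiForm k e v = 0 := by
      rw [semiForm_e hkn e v he]
      exact hv _ rfl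
    rw [h1, h2]; ring
  -- the derivative of ν
  · set L : ℝ := (-(n:ℝ)) * g u ^ (-(n:ℤ) - 1) * deriv g u with hLdef
    have hνd : HasDerivAt ν ((-(deriv r u * lam u + r u * L)) • y
        - (F' u / (2 * deriv g u) / Real.sqrt (-c)) • e) u := by
      have t1 : HasDerivAt (fun t => (-(r t * lam t)) • y)
          ((-(deriv r u * lam u + r u * L)) • y) u := by
        have := (((hrd u hu).mul (hlamd u hu)).neg).smul_const y
        rwa [hrderiv u hu]
      have t2 : HasDerivAt (fun t => deriv r t • e)
          ((F' u / (2 * deriv g u) / Real.sqrt (-c)) • e) u := (hdr2 u hu).smul_const e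
      exact (t1.sub t2).congr_of_eventuallyEq (by filter_upwards with x using hν x)
    have hzq : g u ^ (-(n:ℤ) - 1) = (lam u - h) / g u := by
      rw [zpow_sub_one₀ (hgpos u hu).ne', hlam u]
      field_simp
      ring
    have hgn : g u ^ (-(n:ℤ)) = lam u - h := by rw [hlam u]; ring
    set C : ℝ := -((n : ℝ) * h - ((n : ℝ) - 1) * lam u) with hCdef
    have hA : -(deriv r u * lam u + r u * L) = C * deriv r u := by
      rw [hLdef, hzq, hrderiv u hu, hr u, hCdef]
      field_simp [(hgpos u hu).ne', hsqpos.ne']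
      ring
    have hB : -(F' u / (2 * deriv g u) / Real.sqrt (-c)) = C * (r u * lam u) := by
      rw [hF'def, hr u, hCdef]
      simp only [hzq]
      field_simp [(hgpos u hu).ne', hsqpos.ne', hg' u hu]
      ring
    rw [hνd.deriv, hφderiv, smul_add, smul_smul, smul_smul, sub_eq_add_neg, ← neg_smul,
      hA, hB]
end

section
/- Let $n\ge 3$ be an integer and let $h$ satisfy $-1<h<-2\sqrt{n-1}/n$ (so that $h^2n^2-4n+4>0$ and $h^2<1$). Define $\psi:(0,\infty)\to\mathbb{R}$ by $\psi(t) = t^2(h+t^{-n})^2 - t^2$. Then $\psi$ has exactly two critical points on $(0,\infty)$, namely $v_0 = 2^{-1/n}\Big(\frac{h(n-2)+\sqrt{h^2n^2-4n+4}}{h^2-1}\Big)^{1/n}$ and $v_1 = 2^{-1/n}\Big(\frac{h(n-2)-\sqrt{h^2n^2-4n+4}}{h^2-1}\Big)^{1/n}$, and $0<v_0<v_1$. Moreover, $\psi$ is decreasing on $(0,v_0)$, increasing on $(v_0,v_1)$ and decreasing on $(v_1,\infty)$ (equivalently, for any constant $c$, the function $q_1(t)=c+\psi(t)$ has the same monotonicity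 pattern). -/
set_option maxHeartbeats 1000000 in
/-- From the proof of Theorem 3.1 of the paper: for `-1 < h < -2√(n-1)/n`,
the function `ψ(t) = t²(h + t^{-n})² - t²` has exactly the two critical points
`v₀ < v₁` on `(0, ∞)` given by the stated formulas, and `ψ` is decreasing on
`(0, v₀]`, increasing on `[v₀, v₁]` and decreasing on `[v₁, ∞)`. -/
theorem stmt_14 (n : ℕ) (hn : 3 ≤ n) (h : ℝ)
    (hh1 : -1 < h) (hh2 : h < -(2 * Real.sqrt ((n : ℝ) - 1) / n))
    (ψ : ℝ → ℝ) (hψ : ∀ t, ψ t = t ^ 2 * (h + t ^ (-(n : ℤ))) ^ 2 - t ^ 2)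
    (v₀ v₁ : ℝ)
    (hv₀ : v₀ = (2 : ℝ) ^ (-(1 : ℝ) / (n : ℝ)) *
      ((h * ((n : ℝ) - 2) + Real.sqrt (h ^ 2 * (n : ℝ) ^ 2 - 4 * (n : ℝ) + 4)) /
        (h ^ 2 - 1)) ^ ((1 : ℝ) / (n : ℝ)))
    (hv₁ : v₁ = (2 : ℝ) ^ (-(1 : ℝ) / (n : ℝ)) *
      ((h * ((n : ℝ) - 2) - Real.sqrt (h ^ 2 * (n : ℝ) ^ 2 - 4 * (n : ℝ) + 4)) /
        (h ^ 2 - 1)) ^ ((1 : ℝ) / (n : ℝ))) :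
    0 < v₀ ∧ v₀ < v₁ ∧
    {t : ℝ | 0 < t ∧ deriv ψ t = 0} = {v₀, v₁} ∧
    StrictAntiOn ψ (Set.Ioc 0 v₀) ∧
    StrictMonoOn ψ (Set.Icc v₀ v₁) ∧
    StrictAntiOn ψ (Set.Ici v₁) := by
  have hN3 : (3:ℝ) ≤ (n:ℝ) := by exact_mod_cast hn
  have hNpos : (0:ℝ) < (n:ℝ) := by linarith
  have hNne : (n:ℝ) ≠ 0 := ne_of_gt hNpos
  have hn0 : n ≠ 0 := by omega
  -- basic sign facts
  have hsqnn : 0 ≤ Real.sqrt ((n:ℝ)-1) := Real.sqrt_nonneg _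
  have hq : 0 ≤ 2 * Real.sqrt ((n:ℝ)-1) / n := by positivity
  have hh0 : h < 0 := by linarith
  have h2lt1 : h^2 < 1 := by
    nlinarith [mul_pos (show (0:ℝ) < 1 + h by linarith) (show (0:ℝ) < 1 - h by linarith)]
  have hden : h^2 - 1 < 0 := by linarith
  have hsq1 : (Real.sqrt ((n:ℝ)-1))^2 = (n:ℝ)-1 := Real.sq_sqrt (by linarith)
  have hkey : 2 * Real.sqrt ((n:ℝ)-1) < -h * n := by
    have h1 : 2 * Real.sqrt ((n:ℝ)-1) / n < -h := by linarith
    have := mul_lt_mul_of_pos_right h1 hNpos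
    calc 2 * Real.sqrt ((n:ℝ)-1) = 2 * Real.sqrt ((n:ℝ)-1) / n * n := by field_simp
    _ < -h * n := this
  have hD : 0 < h ^ 2 * (n:ℝ) ^ 2 - 4 * (n:ℝ) + 4 := by
    have h4 : (2 * Real.sqrt ((n:ℝ)-1)) * (2 * Real.sqrt ((n:ℝ)-1))
        < (-h * (n:ℝ)) * (-h * (n:ℝ)) := mul_self_lt_mul_self (by positivity) hkey
    nlinarith [h4, hsq1]
  -- power helper
  have hvpow : ∀ Z : ℝ, 0 < Z →
      ((2 : ℝ) ^ (-(1 : ℝ) / (n : ℝ)) * Z ^ ((1 : ℝ) / (n : ℝ))) ^ n = Z / 2 := by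
    intro Z hZ
    rw [mul_pow, ← Real.rpow_natCast ((2:ℝ) ^ (-(1:ℝ)/(n:ℝ))) n,
      ← Real.rpow_natCast (Z ^ ((1:ℝ)/(n:ℝ))) n,
      ← Real.rpow_mul (by norm_num : (0:ℝ) ≤ 2), ← Real.rpow_mul hZ.le,
      show (-(1:ℝ)/(n:ℝ)) * (n:ℝ) = -1 by field_simp,
      show ((1:ℝ)/(n:ℝ)) * (n:ℝ) = 1 by field_simp,
      Real.rpow_neg_one, Real.rpow_one]
    ring
  set s : ℝ := Real.sqrt (h ^ 2 * (n:ℝ) ^ 2 - 4 * (n:ℝ) + 4) with hsdef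
  have hs0 : 0 < s := Real.sqrt_pos.mpr hD
  have hs2 : s ^ 2 = h ^ 2 * (n:ℝ) ^ 2 - 4 * (n:ℝ) + 4 := Real.sq_sqrt hD.le
  have hn2pos : (0:ℝ) < (n:ℝ) - 2 := by linarith
  have hbpos : 0 < -(h * ((n:ℝ) - 2)) := by
    have e : -(h * ((n:ℝ) - 2)) = (-h) * ((n:ℝ) - 2) := by ring
    rw [e]; exact mul_pos (by linarith) hn2pos
  have hslt : s < -(h * ((n:ℝ) - 2)) := by
    rw [hsdef]
    refine (Real.sqrt_lt' hbpos).mpr ?_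
    nlinarith [mul_pos (show (0:ℝ) < 1 - h^2 by linarith)
      (show (0:ℝ) < (n:ℝ) - 1 by linarith)]
  set A : ℝ := h * ((n:ℝ) - 2) + s with hAdef
  set B : ℝ := h * ((n:ℝ) - 2) - s with hBdef
  have hA : A < 0 := by rw [hAdef]; linarith
  have hB : B < 0 := by rw [hBdef]; linarith
  have hAne : A ≠ 0 := ne_of_lt hA
  have hBne : B ≠ 0 := ne_of_lt hB
  have hABpos : 0 < A * B := mul_pos_of_neg_of_neg hA hB
  set X : ℝ := A / (h ^ 2 - 1) with hXdef
  set Y : ℝ := B / (h ^ 2 - 1) with hYdef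
  have hX : 0 < X := by rw [hXdef, div_pos_iff]; right; exact ⟨hA, hden⟩
  have hY : 0 < Y := by rw [hYdef, div_pos_iff]; right; exact ⟨hB, hden⟩
  have hXY : X < Y := by
    have : Y - X = (B - A) / (h ^ 2 - 1) := by rw [hXdef, hYdef]; ring
    have h2 : B - A = -(2*s) := by rw [hAdef, hBdef]; ring
    have h3 : 0 < Y - X := by
      rw [this, h2, div_pos_iff]; right; constructor <;> linarith
    linarith
  have hv0pos : 0 < v₀ := by
    rw [hv₀]; exact mul_pos (Real.rpow_pos_of_pos two_pos _) (Real.rpow_pos_of_pos hX _)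
  have hv1pos : 0 < v₁ := by
    rw [hv₁]; exact mul_pos (Real.rpow_pos_of_pos two_pos _) (Real.rpow_pos_of_pos hY _)
  have hv01 : v₀ < v₁ := by
    rw [hv₀, hv₁]
    exact mul_lt_mul_of_pos_left
      (Real.rpow_lt_rpow hX.le hXY (by positivity)) (Real.rpow_pos_of_pos two_pos _)
  have hv0n : v₀ ^ n = X / 2 := by rw [hv₀]; exact hvpow X hX
  have hv1n : v₁ ^ n = Y / 2 := by rw [hv₁]; exact hvpow Y hY
  set u₀ : ℝ := 2 * (h ^ 2 - 1) / A with hu0def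
  set u₁ : ℝ := 2 * (h ^ 2 - 1) / B with hu1def
  have hu : ∀ t : ℝ, t ^ (-(n:ℤ)) = ((t ^ n)⁻¹ : ℝ) := by
    intro t; rw [zpow_neg, zpow_natCast]
  have hu0v : v₀ ^ (-(n:ℤ)) = u₀ := by
    rw [hu v₀, hv0n, inv_div, hXdef, div_div_eq_mul_div, hu0def]
  have hu1v : v₁ ^ (-(n:ℤ)) = u₁ := by
    rw [hu v₁, hv1n, inv_div, hYdef, div_div_eq_mul_div, hu1def]
  have hu0pos : 0 < u₀ := by
    rw [hu0def, div_pos_iff]; right; constructor <;> linarith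
  have hu1pos : 0 < u₁ := by
    rw [hu1def, div_pos_iff]; right; constructor <;> linarith
  have hu10 : u₁ < u₀ := by
    have hnum : 2 * (h^2-1) * B - A * (2 * (h^2-1)) = -(4 * (h^2-1) * s) := by
      rw [hAdef, hBdef]; ring
    have : 0 < u₀ - u₁ := by
      rw [hu0def, hu1def, div_sub_div _ _ hAne hBne, hnum, div_pos_iff]
      left; constructor
      · nlinarith [mul_pos (show (0:ℝ) < 1 - h^2 by linarith) hs0]
      · exact hABpos
    linarith
  -- Vieta-style identities
  have hP1 : ((n:ℝ) - 1) * (u₀ + u₁) = (2 - (n:ℝ)) * h := by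
    rw [hu0def, hu1def]
    field_simp
    rw [hAdef, hBdef]
    linear_combination (2 - (n:ℝ)) * h * hs2
  have hP2 : ((n:ℝ) - 1) * (u₀ * u₁) = 1 - h ^ 2 := by
    rw [hu0def, hu1def]
    field_simp
    rw [hAdef, hBdef]
    linear_combination (1 - h^2) * hs2
  have hfact : ∀ u : ℝ, (1 - (n:ℝ)) * u ^ 2 + (2 - (n:ℝ)) * h * u + (h ^ 2 - 1)
      = (1 - (n:ℝ)) * (u - u₀) * (u - u₁) := by
    intro u; linear_combination (-u) * hP1 + hP2
  -- derivative
  have hder : ∀ t : ℝ, 0 < t → HasDerivAt ψ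
      (2 * t * (1 - (n:ℝ)) * (t ^ (-(n:ℤ)) - u₀) * (t ^ (-(n:ℤ)) - u₁)) t := by
    intro t ht
    have hne : t ≠ 0 := ne_of_gt ht
    have h1 := hasDerivAt_zpow (-(n:ℤ)) t (Or.inl hne)
    have h2 := h1.const_add h
    have h3 := h2.pow 2
    have h4 := hasDerivAt_pow 2 t
    have h5 := (h4.mul h3).sub h4
    have hfun : ψ = fun x : ℝ => x ^ 2 * (h + x ^ (-(n:ℤ))) ^ 2 - x ^ 2 := funext hψ
    rw [hfun]
    convert h5 using 1
    · exact rfl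
    · exact rfl
    · exact rfl
    have hz : t ^ (-(n:ℤ) - 1) = t ^ (-(n:ℤ)) / t := zpow_sub_one₀ hne _
    rw [hz]
    have := hfact (t ^ (-(n:ℤ)))
    have hrw : 2 * t * (1 - (n:ℝ)) * (t ^ (-(n:ℤ)) - u₀) * (t ^ (-(n:ℤ)) - u₁)
        = 2 * t * ((1 - (n:ℝ)) * (t ^ (-(n:ℤ))) ^ 2 + (2 - (n:ℝ)) * h * (t ^ (-(n:ℤ)))
          + (h ^ 2 - 1)) := by rw [this]; ring
    rw [hrw]
    push_cast [Pi.pow_apply]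
    field_simp [hne]
    ring
  have hsgn : ∀ t : ℝ, 0 < t → deriv ψ t
      = 2 * t * (1 - (n:ℝ)) * (t ^ (-(n:ℤ)) - u₀) * (t ^ (-(n:ℤ)) - u₁) :=
    fun t ht => (hder t ht).deriv
  have h1N : 1 - (n:ℝ) < 0 := by linarith
  have hcmp : ∀ a b : ℝ, 0 < a → a < b → b ^ (-(n:ℤ)) < a ^ (-(n:ℤ)) := by
    intro a b ha hab
    rw [hu a, hu b]
    have h1 : a ^ n < b ^ n := pow_lt_pow_left₀ hab ha.le hn0
    have h2 : 0 < a ^ n := pow_pos ha n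
    rw [← one_div, ← one_div]
    exact one_div_lt_one_div_of_lt h2 h1
  have hinj : ∀ a b : ℝ, 0 < a → 0 < b → a ^ n = b ^ n → a = b := by
    intro a b ha hb hab
    rcases lt_trichotomy a b with hc | hc | hc
    · exact absurd hab (ne_of_lt (pow_lt_pow_left₀ hc ha.le hn0))
    · exact hc
    · exact absurd hab.symm (ne_of_lt (pow_lt_pow_left₀ hc hb.le hn0))
  -- sign of the derivative
  have hneg1 : ∀ x ∈ Set.Ioo (0:ℝ) v₀, deriv ψ x < 0 := by
    rintro x ⟨hx0, hxv⟩
    rw [hsgn x hx0]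
    have hgt : u₀ < x ^ (-(n:ℤ)) := by
      have := hcmp x v₀ hx0 hxv; rwa [hu0v] at this
    have hf1 : 0 < x ^ (-(n:ℤ)) - u₀ := by linarith
    have hf2 : 0 < x ^ (-(n:ℤ)) - u₁ := by linarith
    have e : 2 * x * (1 - (n:ℝ)) * (x ^ (-(n:ℤ)) - u₀) * (x ^ (-(n:ℤ)) - u₁)
        = (1 - (n:ℝ)) * (2 * x * ((x ^ (-(n:ℤ)) - u₀) * (x ^ (-(n:ℤ)) - u₁))) := by ring
    rw [e]
    exact mul_neg_of_neg_of_pos h1N (mul_pos (by linarith) (mul_pos hf1 hf2))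
  have hpos1 : ∀ x ∈ Set.Ioo v₀ v₁, 0 < deriv ψ x := by
    rintro x ⟨hxv0, hxv1⟩
    have hx0 : 0 < x := hv0pos.trans hxv0
    rw [hsgn x hx0]
    have hlt : x ^ (-(n:ℤ)) < u₀ := by
      have := hcmp v₀ x hv0pos hxv0; rwa [hu0v] at this
    have hgt : u₁ < x ^ (-(n:ℤ)) := by
      have := hcmp x v₁ hx0 hxv1; rwa [hu1v] at this
    have hf1 : 0 < u₀ - x ^ (-(n:ℤ)) := by linarith
    have hf2 : 0 < x ^ (-(n:ℤ)) - u₁ := by linarith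
    have e : 2 * x * (1 - (n:ℝ)) * (x ^ (-(n:ℤ)) - u₀) * (x ^ (-(n:ℤ)) - u₁)
        = ((n:ℝ) - 1) * (2 * x * ((u₀ - x ^ (-(n:ℤ))) * (x ^ (-(n:ℤ)) - u₁))) := by ring
    rw [e]
    exact mul_pos (by linarith) (mul_pos (by linarith) (mul_pos hf1 hf2))
  have hneg2 : ∀ x ∈ Set.Ioi v₁, deriv ψ x < 0 := by
    intro x hx
    have hx1 : v₁ < x := hx
    have hx0 : 0 < x := hv1pos.trans hx1
    rw [hsgn x hx0]
    have hlt1 : x ^ (-(n:ℤ)) < u₁ := by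
      have := hcmp v₁ x hv1pos hx1; rwa [hu1v] at this
    have hf1 : 0 < u₀ - x ^ (-(n:ℤ)) := by linarith
    have hf2 : 0 < u₁ - x ^ (-(n:ℤ)) := by linarith
    have e : 2 * x * (1 - (n:ℝ)) * (x ^ (-(n:ℤ)) - u₀) * (x ^ (-(n:ℤ)) - u₁)
        = (1 - (n:ℝ)) * (2 * x * ((u₀ - x ^ (-(n:ℤ))) * (u₁ - x ^ (-(n:ℤ))))) := by ring
    rw [e]
    exact mul_neg_of_neg_of_pos h1N (mul_pos (by linarith) (mul_pos hf1 hf2))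
  have hcont : ∀ x : ℝ, 0 < x → ContinuousAt ψ x :=
    fun x hx => (hder x hx).differentiableAt.continuousAt
  refine ⟨hv0pos, hv01, ?_, ?_, ?_, ?_⟩
  · -- set of critical points
    ext t
    simp only [Set.mem_setOf_eq, Set.mem_insert_iff, Set.mem_singleton_iff]
    constructor
    · rintro ⟨ht0, hd⟩
      rw [hsgn t ht0] at hd
      have hc1 : (2 : ℝ) * t * (1 - (n:ℝ)) ≠ 0 :=
        ne_of_lt (mul_neg_of_pos_of_neg (by linarith) h1N)
      rcases mul_eq_zero.mp hd with hd1 | hd2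
      · rcases mul_eq_zero.mp hd1 with hd3 | hd4
        · exact absurd hd3 hc1
        · left
          have he : t ^ (-(n:ℤ)) = v₀ ^ (-(n:ℤ)) := by rw [hu0v]; linarith
          rw [hu t, hu v₀] at he
          exact hinj t v₀ ht0 hv0pos (inv_injective he)
      · right
        have he : t ^ (-(n:ℤ)) = v₁ ^ (-(n:ℤ)) := by rw [hu1v]; linarith
        rw [hu t, hu v₁] at he
        exact hinj t v₁ ht0 hv1pos (inv_injective he)
    · rintro (h1 | h1) <;> rw [h1]
      · exact ⟨hv0pos, by rw [hsgn v₀ hv0pos, hu0v]; ring⟩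
      · exact ⟨hv1pos, by rw [hsgn v₁ hv1pos, hu1v]; ring⟩
  · refine strictAntiOn_of_deriv_neg (convex_Ioc 0 v₀)
      (fun x hx => (hcont x hx.1).continuousWithinAt) ?_
    intro x hx
    rw [interior_Ioc] at hx
    exact hneg1 x hx
  · refine strictMonoOn_of_deriv_pos (convex_Icc v₀ v₁)
      (fun x hx => (hcont x (hv0pos.trans_le hx.1)).continuousWithinAt) ?_
    intro x hx
    rw [interior_Icc] at hx
    exact hpos1 x hx
  · refine strictAntiOn_of_deriv_neg (convex_Ici v₁)
      (fun x hx => (hcont x (hv1pos.trans_le hx)).continuousWithinAt) ?_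
    intro x hx
    rw [interior_Ici] at hx
    exact hneg2 x hx
end

section
/- Let $n\ge 3$ be an integer and let $h$ satisfy $-1<h<-2\sqrt{n-1}/n$. Let $v_1 = 2^{-1/n}\Big(\frac{h(n-2)-\sqrt{h^2n^2-4n+4}}{h^2-1}\Big)^{1/n}$ and define $c_1 = (2-2h^2)^{(n-2)/n}\; n\;\big(-h(n-2)+\sqrt{h^2n^2-4n+4}\big)^{(2-2n)/n}\;\big(h^2n-2-h\sqrt{h^2n^2-4n+4}\big)$. Then: (i) $c_1>0$; (ii) $c_1 - v_1^2 + v_1^2(h+v_1^{-n})^2 = 0$, i.e. with $c=c_1$ the function $q_1(t)=c-t^2+t^2(h+t^{-n})^2$ vanishes at $v_1$; (iii) $\frac{v_1^2}{c_1} = \frac{2+(h^2-2)n+h\sqrt{4+n(h^2n-4)}}{2(h^2-1)n}$, and this quantity is greater than $1$. -/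
set_option maxHeartbeats 1000000 in
/-- From the proof of Theorem 3.1 of the paper: for `-1 < h < -2√(n-1)/n`, the
constant `c₁` is positive, `q₁(v₁) = 0` when `c = c₁`, and `v₁²/c₁` equals the
stated expression, which is greater than `1`. -/
theorem stmt_15 (n : ℕ) (hn : 3 ≤ n) (h : ℝ)
    (hh1 : -1 < h) (hh2 : h < -(2 * Real.sqrt ((n : ℝ) - 1) / n))
    (v₁ c₁ : ℝ)
    (hv₁ : v₁ = (2 : ℝ) ^ (-(1 : ℝ) / (n : ℝ)) *
      ((h * ((n : ℝ) - 2) - Real.sqrt (h ^ 2 * (n : ℝ) ^ 2 - 4 * (n : ℝ) + 4)) /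
        (h ^ 2 - 1)) ^ ((1 : ℝ) / (n : ℝ)))
    (hc₁ : c₁ = (2 - 2 * h ^ 2) ^ (((n : ℝ) - 2) / (n : ℝ)) * (n : ℝ) *
      (-(h * ((n : ℝ) - 2)) + Real.sqrt (h ^ 2 * (n : ℝ) ^ 2 - 4 * (n : ℝ) + 4)) ^
        ((2 - 2 * (n : ℝ)) / (n : ℝ)) *
      (h ^ 2 * (n : ℝ) - 2 - h * Real.sqrt (h ^ 2 * (n : ℝ) ^ 2 - 4 * (n : ℝ) + 4))) :
    0 < c₁ ∧
    c₁ - v₁ ^ 2 + v₁ ^ 2 * (h + v₁ ^ (-(n : ℤ))) ^ 2 = 0 ∧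
    v₁ ^ 2 / c₁ =
      (2 + (h ^ 2 - 2) * (n : ℝ) + h * Real.sqrt (4 + (n : ℝ) * (h ^ 2 * (n : ℝ) - 4))) /
        (2 * (h ^ 2 - 1) * (n : ℝ)) ∧
    1 < v₁ ^ 2 / c₁ := by
  have hn3 : (3:ℝ) ≤ (n:ℝ) := by exact_mod_cast hn
  set N := (n:ℝ) with hNdef
  have hN0 : (0:ℝ) < N := by linarith
  have hh0 : h < 0 := lt_of_lt_of_le hh2 (by
    have : 0 ≤ 2 * Real.sqrt (N - 1) / N := by positivity
    linarith)
  have hhsq : h^2 < 1 := by nlinarith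
  have ht2 : Real.sqrt (N-1) ^ 2 = N - 1 := Real.sq_sqrt (by linarith)
  have htn : 0 ≤ Real.sqrt (N-1) := Real.sqrt_nonneg _
  have hhN : 2 * Real.sqrt (N-1) < -(h*N) := by
    have := (div_lt_iff₀ hN0).mp (by linarith [hh2] : 2 * Real.sqrt (N-1) / N < -h)
    linarith
  have hE : 4*(N-1) < h^2*N^2 := by
    have h1 : (2*Real.sqrt (N-1))*(2*Real.sqrt (N-1)) < (-(h*N))*(-(h*N)) :=
      mul_self_lt_mul_self (by positivity) hhN
    nlinarith [h1, ht2]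
  have hEpos : 0 < h^2*N^2 - 4*N + 4 := by nlinarith
  set s := Real.sqrt (h^2*N^2 - 4*N + 4) with hsdef
  have hs2 : s^2 = h^2*N^2 - 4*N + 4 := Real.sq_sqrt hEpos.le
  have hspos : 0 < s := Real.sqrt_pos.mpr hEpos
  set B := 2 - 2*h^2 with hBdef
  have hBpos : 0 < B := by nlinarith
  set C := s - h*(N-2) with hCdef
  have hCpos : 0 < C := by nlinarith
  set K := h^2*N - 2 - h*s with hKdef
  have hh2N : 2 < h^2*N := by nlinarith
  have hKpos : 0 < K := by nlinarith [mul_pos (neg_pos.mpr hh0) hspos]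
  have hnne : N ≠ 0 := ne_of_gt hN0
  have hr : (0:ℝ) < C/B := div_pos hCpos hBpos
  -- v₁ = (C/B)^(1/N)
  have hv : v₁ = (C/B) ^ ((1:ℝ)/N) := by
    rw [hv₁]
    have hne : h^2 - 1 ≠ 0 := by nlinarith
    have h1 : (h*(N-2) - s)/(h^2-1) = 2*(C/B) := by
      rw [hCdef, hBdef, mul_div_assoc', div_eq_div_iff hne (by nlinarith)]
      ring
    rw [h1, show (-(1:ℝ)/N) = -((1:ℝ)/N) by ring, Real.rpow_neg (by norm_num),
      ← Real.inv_rpow (by norm_num), ← Real.mul_rpow (by norm_num) (by positivity)]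
    congr 1
    field_simp
  have hv1pos : 0 < v₁ := by rw [hv]; positivity
  have hvn : v₁ ^ n = C/B := by
    rw [hv, ← Real.rpow_natCast ((C/B) ^ ((1:ℝ)/N)) n, ← Real.rpow_mul hr.le,
      one_div_mul_cancel hnne, Real.rpow_one]
  have hvz : v₁ ^ (-(n:ℤ)) = B/C := by
    rw [zpow_neg, zpow_natCast, hvn, inv_div]
  have hv2 : v₁^2 = (C/B) ^ ((2:ℝ)/N) := by
    rw [hv, ← Real.rpow_natCast ((C/B) ^ ((1:ℝ)/N)) 2, ← Real.rpow_mul hr.le]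
    congr 1
    push_cast
    ring
  -- c₁ = v₁² * (B*N*K/C²)
  have hc : c₁ = v₁^2 * (B*N*K/C^2) := by
    rw [hc₁, hv2]
    have e1 : -(h*(N-2)) + Real.sqrt (h^2*N^2 - 4*N + 4) = C := by
      rw [hCdef, hsdef]; ring
    rw [e1]
    have e2 : (N-2)/N = 1 - 2/N := by field_simp
    have e3 : (2 - 2*N)/N = 2/N - 2 := by field_simp
    rw [e2, e3, Real.rpow_sub hBpos, Real.rpow_sub hCpos, Real.rpow_one,
      Real.div_rpow hCpos.le hBpos.le,
      show (2:ℝ) = ((2:ℕ):ℝ) by norm_num, Real.rpow_natCast]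
    have hX : (0:ℝ) < B ^ ((2:ℝ)/N) := Real.rpow_pos_of_pos hBpos _
    have hY : (0:ℝ) < C ^ ((2:ℝ)/N) := Real.rpow_pos_of_pos hCpos _
    field_simp
  have hBNK : 0 < B*N*K := mul_pos (mul_pos hBpos hN0) hKpos
  have hc1pos : 0 < c₁ := by rw [hc]; positivity
  -- key polynomial identity
  have hP : B*N*K + K^2 - C^2 = 0 := by
    rw [hBdef, hKdef, hCdef]
    linear_combination (h^2-1) * hs2
  have hfrac : v₁^2/c₁ = C^2/(B*N*K) := by
    rw [hc]
    rw [div_eq_div_iff (by positivity) hBNK.ne']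
    field_simp
  refine ⟨hc1pos, ?_, ?_, ?_⟩
  · rw [hc, hvz]
    have hC0 : C ≠ 0 := ne_of_gt hCpos
    have inner : B*N*K/C^2 - 1 + (h + B/C)^2 = 0 := by
      field_simp
      linear_combination (h^2-1) * C^0 * hs2
    linear_combination v₁^2 * inner
  · have hsq : Real.sqrt (4 + N*(h^2*N - 4)) = s := by
      rw [hsdef, show 4 + N*(h^2*N-4) = h^2*N^2 - 4*N + 4 by ring]
    rw [hfrac, hsq]
    rw [div_eq_div_iff hBNK.ne' (ne_of_lt (by nlinarith : 2*(h^2-1)*N < 0))]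
    rw [hBdef, hKdef, hCdef]
    linear_combination (-2*(h^2-1)^2*N) * hs2
  · rw [hfrac]
    rw [lt_div_iff₀ hBNK, one_mul]
    nlinarith [sq_nonneg K, hP, hKpos]
end
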